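/- arXiv:1511.06121 — 2 statements merged into one kernel-verified Lean document; each statement's English description precedes it below -/
import Mathlib

section
/- (Dyson–Hunt–Kac formula) For any real numbers x_1,…,x_n, ∑_{σ ∈ S_n} M(0, x_{σ(1)}, …, x_{σ(n)}) = ∑_{k=1}^{n} (1/k) ∑_{σ ∈ S_n} max(0, x_{σ(1)} + ⋯ + x_{σ(k)}), where M(y_0, y_1, …, y_n) = max over 0 ≤ j ≤ n of (y_0 + y_1 + ⋯ + y_j). -/
open Finset

noncomputable section DHK

def Sp (z : ℕ → ℝ) (j : ℕ) : ℝ := ∑ i ∈ Finset.range j, z i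

def Mp (z : ℕ → ℝ) (m : ℕ) : ℝ :=
  (Finset.range (m+1)).sup' Finset.nonempty_range_add_one (Sp z)

lemma Sp_succ (z : ℕ → ℝ) (j : ℕ) : Sp z (j+1) = Sp z j + z j :=
  Finset.sum_range_succ z j

lemma Mp_zero (z : ℕ → ℝ) : Mp z 0 = 0 := by
  simp [Mp, Sp]

lemma le_Mp (z : ℕ → ℝ) {m j : ℕ} (hj : j ≤ m) : Sp z j ≤ Mp z m :=
  Finset.le_sup' (Sp z) (Finset.mem_range.mpr (by omega))

lemma Mp_le (z : ℕ → ℝ) {m : ℕ} {c : ℝ} (h : ∀ j ≤ m, Sp z j ≤ c) : Mp z m ≤ c :=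
  Finset.sup'_le _ _ fun j hj => h j (Nat.lt_succ_iff.mp (Finset.mem_range.mp hj))

lemma Mp_succ (z : ℕ → ℝ) (m : ℕ) : Mp z (m+1) = Sp z (m+1) ⊔ Mp z m := by
  apply le_antisymm
  · refine Mp_le z fun j hj => ?_
    rcases Nat.lt_or_ge j (m+1) with h | h
    · exact le_sup_of_le_right (le_Mp z (by omega))
    · have : j = m + 1 := by omega
      rw [this]; exact le_sup_left
  · rw [sup_le_iff]
    exact ⟨le_Mp z le_rfl, Mp_le z fun j hj => le_Mp z (by omega)⟩

lemma Sp_congr {z w : ℕ → ℝ} {m : ℕ} (h : ∀ i < m, z i = w i) {j : ℕ} (hj : j ≤ m) :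
    Sp z j = Sp w j := by
  refine Finset.sum_congr rfl fun i hi => h i ?_
  exact lt_of_lt_of_le (Finset.mem_range.mp hi) hj

lemma Mp_congr {z w : ℕ → ℝ} {m : ℕ} (h : ∀ i < m, z i = w i) : Mp z m = Mp w m := by
  refine Finset.sup'_congr _ rfl fun j hj => Sp_congr h ?_
  exact Nat.lt_succ_iff.mp (Finset.mem_range.mp hj)

lemma sup'_add_const {α : Type*} (s : Finset α) (h : s.Nonempty) (f : α → ℝ) (c : ℝ) :
    s.sup' h (fun a => f a + c) = s.sup' h f + c := by
  apply le_antisymm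
  · exact Finset.sup'_le _ _ fun b hb => add_le_add_left (Finset.le_sup' f hb) c
  · rw [← le_sub_iff_add_le]
    refine Finset.sup'_le _ _ fun b hb => ?_
    rw [le_sub_iff_add_le]
    exact Finset.le_sup' (fun a => f a + c) hb

section Kac

variable (y : ℕ → ℝ) (k : ℕ)

def Tw (j : ℕ) : ℝ := Sp y (j % k) + (j / k : ℕ) * Sp y k

def rot (r : ℕ) : ℕ → ℝ := fun i => y ((i + r) % k)

variable (hk : 0 < k)
include hk

lemma Tw_succ (j : ℕ) : Tw y k (j+1) = Tw y k j + y (j % k) := by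
  rcases Nat.lt_or_ge (j % k + 1) k with h | h
  · have h1 : (j+1) % k = j % k + 1 := by
      conv_lhs => rw [← Nat.mod_add_div j k]
      rw [Nat.add_right_comm, Nat.add_mul_mod_self_left, Nat.mod_eq_of_lt h]
    have h2 : (j+1) / k = j / k := by
      conv_lhs => rw [← Nat.mod_add_div j k]
      rw [Nat.add_right_comm, Nat.add_mul_div_left _ _ hk, Nat.div_eq_of_lt h, Nat.zero_add]
    rw [Tw, Tw, h1, h2, Sp_succ]; ring
  · have hmk : j % k + 1 = k := by have := Nat.mod_lt j hk; omega
    have h1 : (j+1) % k = 0 := by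
      conv_lhs => rw [← Nat.mod_add_div j k]
      rw [Nat.add_right_comm, hmk, Nat.add_mul_mod_self_left, Nat.mod_self]
    have h2 : (j+1) / k = j / k + 1 := by
      conv_lhs => rw [← Nat.mod_add_div j k]
      rw [Nat.add_right_comm, hmk, Nat.add_mul_div_left _ _ hk, Nat.div_self hk]
      ring
    have h3 : Sp y k = Sp y (j % k) + y (j % k) := by
      rw [← Sp_succ, hmk]
    rw [Tw, Tw, h1, h2]
    push_cast
    rw [Sp]; simp only [Finset.range_zero, Finset.sum_empty]
    nlinarith [h3]

lemma Tw_add (j : ℕ) : Tw y k (j + k) = Tw y k j + Sp y k := by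
  rw [Tw, Tw, Nat.add_mod_right, Nat.add_div_right _ hk]
  push_cast; ring

lemma Sp_rot (r j : ℕ) : Sp (rot y k r) j = Tw y k (r + j) - Tw y k r := by
  induction j with
  | zero => simp [Sp]
  | succ j ih =>
    rw [Sp_succ, ih, rot, ← Nat.add_assoc, Tw_succ y k hk (r + j), Nat.add_comm j r]
    ring

def U (r : ℕ) : ℝ :=
  (Finset.Ico r (r+k)).sup' (Finset.nonempty_Ico.mpr (by omega)) (Tw y k)

lemma le_U {r j : ℕ} (h1 : r ≤ j) (h2 : j < r + k) : Tw y k j ≤ U y k hk r := by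
  rw [U]
  exact Finset.le_sup' (Tw y k) (Finset.mem_Ico.mpr ⟨h1, h2⟩)

lemma U_le {r : ℕ} {c : ℝ} (h : ∀ j, r ≤ j → j < r + k → Tw y k j ≤ c) :
    U y k hk r ≤ c := by
  rw [U]
  refine Finset.sup'_le _ _ fun j hj => ?_
  rw [Finset.mem_Ico] at hj
  exact h j hj.1 hj.2

lemma U_eq_range (r : ℕ) :
    U y k hk r = (Finset.range k).sup' (Finset.nonempty_range_iff.mpr (by omega))
      (fun j => Tw y k (r + j)) := by
  apply le_antisymm
  · refine U_le y k hk fun j h1 h2 => ?_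
    have : j = r + (j - r) := by omega
    rw [this]
    exact Finset.le_sup' (fun j => Tw y k (r + j)) (Finset.mem_range.mpr (by omega))
  · refine Finset.sup'_le _ _ fun j hj => ?_
    rw [Finset.mem_range] at hj
    exact le_U y k hk (by omega) (by omega)

lemma U_shift (r : ℕ) : U y k hk (r + k) = U y k hk r + Sp y k := by
  rw [U_eq_range, U_eq_range, ← sup'_add_const]
  refine Finset.sup'_congr _ rfl fun j _ => ?_
  rw [show r + k + j = (r + j) + k by ring, Tw_add y k hk]

lemma Mp_rot (r : ℕ) : Mp (rot y k r) (k-1) = U y k hk r - Tw y k r := by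
  have hk1 : k - 1 + 1 = k := by omega
  have h0 : Mp (rot y k r) (k-1)
      = (Finset.range k).sup' (Finset.nonempty_range_iff.mpr (by omega)) (Sp (rot y k r)) :=
    Finset.sup'_congr _ (by rw [hk1]) (fun _ _ => rfl)
  rw [h0, U_eq_range, eq_sub_iff_add_eq, ← sup'_add_const]
  refine Finset.sup'_congr _ rfl fun j _ => ?_
  rw [Sp_rot y k hk]
  ring

lemma Tr_le_U (r : ℕ) : Tw y k r ≤ U y k hk r := le_U y k hk le_rfl (by omega)

lemma U_step (hs : 0 < Sp y k) (r : ℕ) :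
    Tw y k (r + k) ⊔ U y k hk r = U y k hk (r + 1) := by
  apply le_antisymm
  · rw [sup_le_iff]
    refine ⟨le_U y k hk (by omega) (by omega), ?_⟩
    obtain ⟨j0, hj0, hUj0⟩ := Finset.exists_mem_eq_sup'
      (Finset.nonempty_Ico.mpr (show r < r + k by omega)) (Tw y k)
    rw [Finset.mem_Ico] at hj0
    have hUr : U y k hk r = Tw y k j0 := hUj0
    rcases eq_or_lt_of_le hj0.1 with h | h
    · have h2 : Tw y k r < Tw y k (r + k) := by
        rw [Tw_add y k hk]; linarith
      rw [hUr, ← h]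
      exact le_trans h2.le (le_U y k hk (by omega) (by omega))
    · rw [hUr]
      exact le_U y k hk (by omega) (by omega)
  · refine U_le y k hk fun j h1 h2 => ?_
    rcases Nat.lt_or_ge j (r + k) with h | h
    · exact le_sup_of_le_right (le_U y k hk (by omega) (by omega))
    · have : j = r + k := by omega
      rw [this]
      exact le_sup_left

lemma kac : ∑ r ∈ Finset.range k, (Mp (rot y k r) k - Mp (rot y k r) (k-1))
    = 0 ⊔ Sp y k := by
  have hterm : ∀ r, Mp (rot y k r) k - Mp (rot y k r) (k-1)
      = Tw y k (r + k) ⊔ U y k hk r - U y k hk r := by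
    intro r
    have hk1 : k - 1 + 1 = k := by omega
    have h1 : Mp (rot y k r) k = Sp (rot y k r) k ⊔ Mp (rot y k r) (k-1) := by
      conv_lhs => rw [← hk1]
      rw [Mp_succ, hk1]
    rw [h1, Mp_rot y k hk, Sp_rot y k hk, max_sub_sub_right]
    ring
  rcases le_or_gt (Sp y k) 0 with hs | hs
  · have h : ∀ r ∈ Finset.range k, Mp (rot y k r) k - Mp (rot y k r) (k-1) = 0 := by
      intro r _
      rw [hterm r]
      have h1 : Tw y k (r + k) ≤ U y k hk r := by
        rw [Tw_add y k hk]
        have := Tr_le_U y k hk r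
        linarith
      rw [sup_eq_right.mpr h1, sub_self]
    rw [Finset.sum_congr rfl h, Finset.sum_const_zero, sup_eq_left.mpr hs]
  · have h : ∀ r ∈ Finset.range k, Mp (rot y k r) k - Mp (rot y k r) (k-1)
        = U y k hk (r+1) - U y k hk r := by
      intro r _
      rw [hterm r, U_step y k hk hs]
    rw [Finset.sum_congr rfl h, Finset.sum_range_sub (U y k hk) k]
    have h0 := U_shift y k hk 0
    rw [Nat.zero_add] at h0
    rw [h0, sup_eq_right.mpr hs.le]
    ring


end Kac

section Perm

variable {n : ℕ} (x : Fin n → ℝ)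

def Y (σ : Equiv.Perm (Fin n)) : ℕ → ℝ := fun i => if h : i < n then x (σ ⟨i, h⟩) else 0

variable {k : ℕ}

def cfun (hk : 0 < k) (hkn : k ≤ n) (r : ℕ) : Fin n → Fin n := fun i =>
  if _h : (i : ℕ) < k then ⟨((i : ℕ) + r) % k, lt_of_lt_of_le (Nat.mod_lt _ hk) hkn⟩ else i

lemma cfun_inj (hk : 0 < k) (hkn : k ≤ n) (r : ℕ) : Function.Injective (cfun (n := n) hk hkn r) := by
  intro i j hij
  unfold cfun at hij
  by_cases hi : (i : ℕ) < k <;> by_cases hj : (j : ℕ) < k <;>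
    simp only [hi, hj, dif_pos, dif_neg, not_false_iff] at hij
  · have hval : ((i : ℕ) + r) % k = ((j : ℕ) + r) % k := congrArg Fin.val hij
    have h2 : (i : ℕ) ≡ (j : ℕ) [MOD k] := Nat.ModEq.add_right_cancel' r hval
    have h3 : (i : ℕ) % k = (j : ℕ) % k := h2
    rw [Nat.mod_eq_of_lt hi, Nat.mod_eq_of_lt hj] at h3
    exact Fin.ext h3
  · exfalso
    have hv := congrArg Fin.val hij
    simp only at hv
    have := Nat.mod_lt ((i : ℕ) + r) hk
    omega
  · exfalso
    have hv := congrArg Fin.val hij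
    simp only at hv
    have := Nat.mod_lt ((j : ℕ) + r) hk
    omega
  · exact hij

def cperm (hk : 0 < k) (hkn : k ≤ n) (r : ℕ) : Equiv.Perm (Fin n) :=
  Equiv.ofBijective _ (Finite.injective_iff_bijective.mp (cfun_inj hk hkn r))

lemma cperm_apply (hk : 0 < k) (hkn : k ≤ n) (r : ℕ) (i : Fin n) :
    cperm hk hkn r i = cfun hk hkn r i := rfl

lemma Y_mul (hk : 0 < k) (hkn : k ≤ n) (σ : Equiv.Perm (Fin n)) (r : ℕ) :
    ∀ i < k, Y x (σ * cperm hk hkn r) i = rot (Y x σ) k r i := by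
  intro i hi
  have hin : i < n := lt_of_lt_of_le hi hkn
  have hm : (i + r) % k < n := lt_of_lt_of_le (Nat.mod_lt _ hk) hkn
  rw [Y, dif_pos hin, rot, Y, dif_pos hm]
  congr 1
  rw [Equiv.Perm.mul_apply, cperm_apply, cfun, dif_pos hi]

lemma key (hk : 0 < k) (hkn : k ≤ n) :
    ∑ σ : Equiv.Perm (Fin n), (0 ⊔ Sp (Y x σ) k)
      = (k : ℝ) * ∑ σ : Equiv.Perm (Fin n), (Mp (Y x σ) k - Mp (Y x σ) (k-1)) := by
  have h1 : ∀ σ : Equiv.Perm (Fin n), (0 ⊔ Sp (Y x σ) k)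
      = ∑ r ∈ Finset.range k,
          (Mp (Y x (σ * cperm hk hkn r)) k - Mp (Y x (σ * cperm hk hkn r)) (k-1)) := by
    intro σ
    rw [← kac (Y x σ) k hk]
    refine Finset.sum_congr rfl fun r _ => ?_
    have hagree := Y_mul x hk hkn σ r
    rw [Mp_congr hagree, Mp_congr (fun i hi => hagree i (lt_of_lt_of_le hi (Nat.sub_le k 1)))]
  rw [Finset.sum_congr rfl (fun σ _ => h1 σ), Finset.sum_comm]
  have h2 : ∀ r : ℕ,
      ∑ σ : Equiv.Perm (Fin n),
        (Mp (Y x (σ * cperm hk hkn r)) k - Mp (Y x (σ * cperm hk hkn r)) (k-1))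
      = ∑ σ : Equiv.Perm (Fin n), (Mp (Y x σ) k - Mp (Y x σ) (k-1)) := by
    intro r
    exact Fintype.sum_equiv (Equiv.mulRight (cperm hk hkn r)) _ _ (fun σ => rfl)
  rw [Finset.sum_congr rfl (fun r _ => h2 r), Finset.sum_const, Finset.card_range,
    nsmul_eq_mul]

lemma filter_sum_eq (σ : Equiv.Perm (Fin n)) {j : ℕ} (hj : j ≤ n) :
    ∑ i ∈ Finset.univ.filter (fun i : Fin n => (i : ℕ) < j), x (σ i) = Sp (Y x σ) j := by
  rw [Finset.sum_filter]
  have h : ∀ i : Fin n, (if (i : ℕ) < j then x (σ i) else 0)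
      = (fun m => if m < j then Y x σ m else 0) ((i : ℕ)) := by
    intro i
    by_cases h : (i : ℕ) < j <;> simp [h, Y, i.isLt, Fin.eta]
  rw [Finset.sum_congr rfl (fun i _ => h i),
    Fin.sum_univ_eq_sum_range (fun m => if m < j then Y x σ m else 0) n,
    ← Finset.sum_filter, Sp]
  congr 1
  ext m
  simp only [Finset.mem_filter, Finset.mem_range]
  omega

end Perm

end DHK

theorem dyson_hunt_kac (n : ℕ) (x : Fin n → ℝ) :
    ∑ σ : Equiv.Perm (Fin n),
      (Finset.range (n + 1)).sup' Finset.nonempty_range_add_one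
        (fun j => ∑ i ∈ Finset.univ.filter (fun i : Fin n => (i : ℕ) < j), x (σ i))
    = ∑ k ∈ Finset.Icc 1 n, (1 / (k : ℝ)) *
        ∑ σ : Equiv.Perm (Fin n),
          max 0 (∑ i ∈ Finset.univ.filter (fun i : Fin n => (i : ℕ) < k), x (σ i)) := by
  have hL : ∀ σ : Equiv.Perm (Fin n),
      (Finset.range (n + 1)).sup' Finset.nonempty_range_add_one
        (fun j => ∑ i ∈ Finset.univ.filter (fun i : Fin n => (i : ℕ) < j), x (σ i))
      = Mp (Y x σ) n := by
    intro σ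
    refine Finset.sup'_congr _ rfl fun j hj => ?_
    exact filter_sum_eq x σ (Nat.lt_succ_iff.mp (Finset.mem_range.mp hj))
  have hR : ∀ k ∈ Finset.Icc 1 n, (1 / (k : ℝ)) *
        ∑ σ : Equiv.Perm (Fin n),
          max 0 (∑ i ∈ Finset.univ.filter (fun i : Fin n => (i : ℕ) < k), x (σ i))
      = ∑ σ : Equiv.Perm (Fin n), (Mp (Y x σ) k - Mp (Y x σ) (k-1)) := by
    intro k hkmem
    rw [Finset.mem_Icc] at hkmem
    have hk : 0 < k := hkmem.1
    have hkn : k ≤ n := hkmem.2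
    have e1 : ∀ σ : Equiv.Perm (Fin n),
        max 0 (∑ i ∈ Finset.univ.filter (fun i : Fin n => (i : ℕ) < k), x (σ i))
        = (0 ⊔ Sp (Y x σ) k) := by
      intro σ
      rw [filter_sum_eq x σ hkn]
    rw [Finset.sum_congr rfl (fun σ _ => e1 σ), key x hk hkn, ← mul_assoc,
      one_div_mul_cancel (by exact_mod_cast hk.ne' : (k : ℝ) ≠ 0), one_mul]
  rw [Finset.sum_congr rfl (fun σ _ => hL σ), Finset.sum_congr rfl hR]
  have e2 : ∀ σ : Equiv.Perm (Fin n), Mp (Y x σ) n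
      = ∑ j ∈ Finset.range n, (Mp (Y x σ) (j+1) - Mp (Y x σ) j) := by
    intro σ
    rw [Finset.sum_range_sub (Mp (Y x σ)) n, Mp_zero, sub_zero]
  rw [Finset.sum_congr rfl (fun σ _ => e2 σ), Finset.sum_comm]
  refine Finset.sum_bij' (fun j _ => j + 1) (fun k _ => k - 1) ?_ ?_ ?_ ?_ ?_
  · intro j hj
    rw [Finset.mem_range] at hj
    show j + 1 ∈ Finset.Icc 1 n
    rw [Finset.mem_Icc]
    omega
  · intro k hkmem
    have h := Finset.mem_Icc.mp hkmem
    show k - 1 ∈ Finset.range n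
    rw [Finset.mem_range]
    omega
  · intro j hj
    show j + 1 - 1 = j
    omega
  · intro k hkmem
    have h := Finset.mem_Icc.mp hkmem
    show k - 1 + 1 = k
    omega
  · intro j _
    show (∑ σ : Equiv.Perm (Fin n), (Mp (Y x σ) (j+1) - Mp (Y x σ) j))
      = ∑ σ : Equiv.Perm (Fin n), (Mp (Y x σ) (j+1) - Mp (Y x σ) (j+1-1))
    simp only [Nat.add_sub_cancel]
end

section
/- (Rudnick–Sarnak identity) For real numbers x_1,…,x_n with x_1 + ⋯ + x_n = 0, ∑_{σ ∈ S_n} M(x_{σ(1)},…,x_{σ(n)}) = (n/4) ∑_{F ⊆ {1,…,n}} (|F|−1)!·(n−|F|−1)!·|∑_{k∈F} x_k|, where the sum is over all subsets F of {1,…,n}, with the convention (−1)! = 0 (so the terms F = ∅ and F = {1,…,n} vanish). -/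
open Finset
open Fin.NatCast
open Fin.CommRing

noncomputable def Psum (c : ℕ → ℝ) (a : ℕ) : ℝ := ∑ t ∈ Finset.range a, c t

lemma Psum_period {m : ℕ} {c : ℕ → ℝ} (hc : ∀ t, c (t + m) = c t) (a : ℕ) :
    Psum c (a + m) = Psum c a + Psum c m := by
  induction a with
  | zero => simp [Psum]
  | succ a ih =>
      have h1 : a + 1 + m = (a + m) + 1 := by omega
      rw [h1, Psum, Finset.sum_range_succ, ← Psum, ih, hc a]
      have h2 : Psum c (a+1) = Psum c a + c a := Finset.sum_range_succ c a
      rw [h2]; ring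

noncomputable def Rmin (m : ℕ) (hm : 0 < m) (c : ℕ → ℝ) (a : ℕ) : ℝ :=
  (Finset.Ico a (a + m)).inf' (Finset.nonempty_Ico.mpr (by omega)) (Psum c)

lemma Rmin_le {m : ℕ} (hm : 0 < m) (c : ℕ → ℝ) {a u : ℕ} (h1 : a ≤ u) (h2 : u < a + m) :
    Rmin m hm c a ≤ Psum c u :=
  Finset.inf'_le _ (Finset.mem_Ico.mpr ⟨h1, h2⟩)

lemma le_Rmin {m : ℕ} (hm : 0 < m) (c : ℕ → ℝ) {a : ℕ} {b : ℝ}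
    (h : ∀ u, a ≤ u → u < a + m → b ≤ Psum c u) : b ≤ Rmin m hm c a :=
  Finset.le_inf' _ _ (fun u hu => h u (Finset.mem_Ico.mp hu).1 (Finset.mem_Ico.mp hu).2)

lemma Rmin_min {m : ℕ} (hm : 0 < m) {c : ℕ → ℝ} (hc : ∀ t, c (t + m) = c t)
    (hS : 0 ≤ Psum c m) (a : ℕ) :
    Rmin m hm c a = min (Psum c a) (Rmin m hm c (a + 1)) := by
  apply le_antisymm
  · apply le_min
    · exact Rmin_le hm c (le_refl a) (by omega)
    · apply le_Rmin
      intro u hu1 hu2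
      rcases lt_or_ge u (a + m) with h | h
      · exact Rmin_le hm c (by omega) h
      · have hu : u = a + m := by omega
        rw [hu, Psum_period hc]
        have := Rmin_le hm c (le_refl a) (show a < a + m by omega)
        linarith
  · apply le_Rmin
    intro u hu1 hu2
    rcases eq_or_lt_of_le hu1 with h | h
    · rw [← h]; exact min_le_left _ _
    · exact le_trans (min_le_right _ _) (Rmin_le hm c h (by omega))

lemma Rmin_shift {m : ℕ} (hm : 0 < m) {c : ℕ → ℝ} (hc : ∀ t, c (t + m) = c t) :
    Rmin m hm c m = Rmin m hm c 0 + Psum c m := by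
  apply le_antisymm
  · obtain ⟨u, hu, hequ⟩ := Finset.exists_mem_eq_inf' (Finset.nonempty_Ico.mpr
      (show (0:ℕ) < 0 + m by omega)) (Psum c)
    rw [show Rmin m hm c 0 = _ from hequ]
    obtain ⟨hu1, hu2⟩ := Finset.mem_Ico.mp hu
    have := Rmin_le hm c (show m ≤ u + m by omega) (show u + m < m + m by omega)
    rw [Psum_period hc] at this
    linarith
  · apply le_Rmin
    intro u hu1 hu2
    have h : u = (u - m) + m := by omega
    rw [h, Psum_period hc]
    have := Rmin_le hm c (show 0 ≤ u - m by omega) (show u - m < 0 + m by omega)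
    linarith

lemma tele {m : ℕ} (hm : 0 < m) {c : ℕ → ℝ} (hc : ∀ t, c (t + m) = c t) :
    ∑ j ∈ Finset.range m, max 0 (Rmin m hm c (j + 1) - Psum c j) = max 0 (Psum c m) := by
  rcases le_or_gt (Psum c m) 0 with hS | hS
  · have h0 : ∀ j ∈ Finset.range m, max 0 (Rmin m hm c (j + 1) - Psum c j) = 0 := by
      intro j _
      have h1 : Rmin m hm c (j+1) ≤ Psum c (j + m) :=
        Rmin_le hm c (by omega) (by omega)
      rw [Psum_period hc] at h1
      have : Rmin m hm c (j+1) - Psum c j ≤ 0 := by linarith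
      exact max_eq_left this
    rw [Finset.sum_congr rfl h0]
    simp [max_eq_left hS]
  · have hS' : 0 ≤ Psum c m := le_of_lt hS
    have h0 : ∀ j ∈ Finset.range m, max 0 (Rmin m hm c (j + 1) - Psum c j)
        = Rmin m hm c (j + 1) - Rmin m hm c j := by
      intro j _
      rw [Rmin_min hm hc hS' j]
      rcases le_total (Psum c j) (Rmin m hm c (j+1)) with h | h
      · rw [min_eq_left h, max_eq_right (by linarith)]
      · rw [min_eq_right h, max_eq_left (by linarith)]; ring
    rw [Finset.sum_congr rfl h0, Finset.sum_range_sub (fun j => Rmin m hm c j),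
      Rmin_shift hm hc]
    rw [max_eq_right hS']
    ring

noncomputable def smax (n : ℕ) (g : ℕ → ℝ) : ℝ :=
  (Finset.range (n+1)).sup' (by simp) (fun t => ∑ i ∈ Finset.Ico t n, g i)

def wseq (n : ℕ) (f : Fin n → ℝ) : ℕ → ℝ := fun t => if h : t < n then f ⟨t, h⟩ else 0

lemma smax_zero (g : ℕ → ℝ) : smax 0 g = 0 := by
  simp [smax]

lemma ico_shift_sum (g : ℕ → ℝ) (s k : ℕ) :
    ∑ i ∈ Finset.Ico (s+1) (k+1), g i = ∑ i ∈ Finset.Ico s k, g (i+1) := by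
  rw [Finset.sum_Ico_eq_sum_range, Finset.sum_Ico_eq_sum_range]
  have h : k + 1 - (s + 1) = k - s := by omega
  rw [h]
  apply Finset.sum_congr rfl
  intro i _
  congr 1
  omega

lemma smax_succ (n : ℕ) (g : ℕ → ℝ) :
    smax (n+1) g = max (∑ i ∈ Finset.range (n+1), g i) (smax n (fun t => g (t+1))) := by
  apply le_antisymm
  · apply Finset.sup'_le
    intro t ht
    rw [Finset.mem_range] at ht
    rcases Nat.eq_zero_or_pos t with h0 | h0
    · subst h0
      rw [← Finset.range_eq_Ico]
      exact le_max_left _ _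
    · obtain ⟨s, rfl⟩ : ∃ s, t = s + 1 := ⟨t - 1, by omega⟩
      refine le_trans ?_ (le_max_right _ _)
      rw [ico_shift_sum]
      exact Finset.le_sup' (fun t => ∑ i ∈ Finset.Ico t n, g (i+1))
        (Finset.mem_range.mpr (show s < n + 1 by omega))
  · apply max_le
    · rw [Finset.range_eq_Ico]
      exact Finset.le_sup' (fun t => ∑ i ∈ Finset.Ico t (n+1), g i)
        (Finset.mem_range.mpr (show 0 < n + 2 by omega))
    · apply Finset.sup'_le
      intro s hs
      rw [Finset.mem_range] at hs
      rw [← ico_shift_sum]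
      exact Finset.le_sup' (fun t => ∑ i ∈ Finset.Ico t (n+1), g i)
        (Finset.mem_range.mpr (show s + 1 < n + 2 by omega))

lemma wseq_shift (n : ℕ) (f : Fin (n+1) → ℝ) :
    (fun t => wseq (n+1) f (t+1)) = wseq n (fun i => f i.succ) := by
  funext t
  unfold wseq
  rcases lt_or_ge t n with h | h
  · rw [dif_pos (by omega : t + 1 < n + 1), dif_pos h]
    congr 1
  · rw [dif_neg (by omega), dif_neg (by omega)]

lemma wseq_sum (n : ℕ) (g : Fin n → ℝ) :
    ∑ i ∈ Finset.range n, wseq n g i = ∑ i, g i := by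
  rw [← Fin.sum_univ_eq_sum_range (fun t => wseq n g t) n]
  apply Finset.sum_congr rfl
  intro i _
  simp [wseq, i.isLt]

lemma cseq_period (n : ℕ) (w : Fin (n+1) → ℝ) (t : ℕ) :
    w ((((t + (n+1)) : ℕ)) : Fin (n+1)) = w ((t : ℕ) : Fin (n+1)) := by
  congr 1
  push_cast
  simp

lemma bridge (n : ℕ) (w : Fin (n+1) → ℝ) (j : ℕ) :
    smax n (wseq n (fun i : Fin n => w (i.succ + (j : Fin (n+1))))) =
    Psum (fun t => w ((t : ℕ) : Fin (n+1))) (j+1+n)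
      - Rmin (n+1) (by omega) (fun t => w ((t : ℕ) : Fin (n+1))) (j+1) := by
  set c : ℕ → ℝ := fun t => w ((t : ℕ) : Fin (n+1)) with hcdef
  have hterm : ∀ t ∈ Finset.range (n+1),
      (∑ i ∈ Finset.Ico t n, wseq n (fun i : Fin n => w (i.succ + (j : Fin (n+1)))) i)
      = Psum c (j+1+n) - Psum c (j+1+t) := by
    intro t ht
    rw [Finset.mem_range] at ht
    have h1 : ∀ i ∈ Finset.Ico t n,
        wseq n (fun i : Fin n => w (i.succ + (j : Fin (n+1)))) i = c (j+1+i) := by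
      intro i hi
      obtain ⟨hi1, hi2⟩ := Finset.mem_Ico.mp hi
      rw [wseq, dif_pos hi2]
      have h2 : (⟨i, hi2⟩ : Fin n).succ = ((i+1 : ℕ) : Fin (n+1)) := by
        apply Fin.ext
        rw [Fin.val_succ, Fin.val_natCast, Fin.val_mk,
          Nat.mod_eq_of_lt (show i + 1 < n + 1 by omega)]
      rw [h2, hcdef]
      have h3 : ((i+1 : ℕ) : Fin (n+1)) + ((j : ℕ) : Fin (n+1)) = ((j+1+i : ℕ) : Fin (n+1)) := by
        push_cast
        ring
      rw [h3]
    rw [Finset.sum_congr rfl h1]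
    have h4 : ∑ i ∈ Finset.Ico t n, c (j+1+i)
        = ∑ u ∈ Finset.Ico (j+1+t) (j+1+n), c u := by
      rw [Finset.sum_Ico_eq_sum_range, Finset.sum_Ico_eq_sum_range]
      have h5 : j + 1 + n - (j + 1 + t) = n - t := by omega
      rw [h5]
      apply Finset.sum_congr rfl
      intro i _
      congr 1
      omega
    rw [h4, Finset.sum_Ico_eq_sub _ (show j+1+t ≤ j+1+n by omega)]
    rfl
  rw [smax, Finset.sup'_congr _ rfl hterm]
  apply le_antisymm
  · apply Finset.sup'_le
    intro t ht
    rw [Finset.mem_range] at ht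
    have := Rmin_le (show 0 < n+1 by omega) c (show j+1 ≤ j+1+t by omega)
      (show j+1+t < (j+1) + (n+1) by omega)
    linarith
  · obtain ⟨u, hu, hequ⟩ := Finset.exists_mem_eq_inf' (Finset.nonempty_Ico.mpr
      (show j+1 < (j+1) + (n+1) by omega)) (Psum c)
    rw [show Rmin (n+1) (by omega) c (j+1) = _ from hequ]
    obtain ⟨hu1, hu2⟩ := Finset.mem_Ico.mp hu
    have hmem : u - (j+1) ∈ Finset.range (n+1) := Finset.mem_range.mpr (by omega)
    have := Finset.le_sup' (fun t => Psum c (j+1+n) - Psum c (j+1+t)) hmem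
    have harg : j + 1 + (u - (j+1)) = u := by omega
    rw [harg] at this
    exact this

lemma rot_pow (n : ℕ) (j : ℕ) (i : Fin (n+1)) :
    ((finRotate (n+1))^j) i = i + (j : Fin (n+1)) := by
  induction j with
  | zero => simp
  | succ j ih =>
      rw [pow_succ', Equiv.Perm.mul_apply, finRotate_succ_apply, ih]
      push_cast
      ring

lemma cycle_pointwise (n : ℕ) (w : Fin (n+1) → ℝ) :
    ∑ j ∈ Finset.range (n+1), max 0 ((∑ i, w i)
      - smax n (wseq n (fun i : Fin n => w (i.succ + (j : Fin (n+1))))))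
    = max 0 (∑ i, w i) := by
  set c : ℕ → ℝ := fun t => w ((t : ℕ) : Fin (n+1)) with hcdef
  have hc : ∀ t, c (t + (n+1)) = c t := fun t => cseq_period n w t
  have hS : ∑ i, w i = Psum c (n+1) := by
    rw [Psum, ← Fin.sum_univ_eq_sum_range (fun t => c t)]
    apply Finset.sum_congr rfl
    intro i _
    rw [hcdef]
    simp [Fin.cast_val_eq_self]
  have h1 : ∀ j ∈ Finset.range (n+1),
      max 0 ((∑ i, w i) - smax n (wseq n (fun i : Fin n => w (i.succ + (j : Fin (n+1))))))
      = max 0 (Rmin (n+1) (by omega) c (j+1) - Psum c j) := by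
    intro j _
    rw [bridge n w j]
    have h2 : Psum c (j+1+n) = Psum c j + Psum c (n+1) := by
      rw [show j + 1 + n = j + (n+1) by omega, Psum_period hc]
    rw [h2, hS]
    ring_nf
    rfl
  rw [Finset.sum_congr rfl h1, tele (show 0 < n+1 by omega) hc, hS]

lemma spitzer (n : ℕ) (f : Fin (n+1) → ℝ) :
    ∑ σ : Equiv.Perm (Fin (n+1)),
      max 0 ((∑ i, f i) - smax n (wseq n (fun i : Fin n => f (σ i.succ))))
    = (n.factorial : ℝ) * max 0 (∑ i, f i) := by
  set H : Equiv.Perm (Fin (n+1)) → ℝ := fun σ =>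
    max 0 ((∑ i, f i) - smax n (wseq n (fun i : Fin n => f (σ i.succ)))) with hH
  have key : ∀ σ : Equiv.Perm (Fin (n+1)),
      ∑ j ∈ Finset.range (n+1), H (σ * (finRotate (n+1))^j) = max 0 (∑ i, f i) := by
    intro σ
    have hcp := cycle_pointwise n (fun i => f (σ i))
    have h1 : ∀ j ∈ Finset.range (n+1), H (σ * (finRotate (n+1))^j)
        = max 0 ((∑ i, f (σ i)) - smax n (wseq n
            (fun i : Fin n => f (σ (i.succ + (j : Fin (n+1))))))) := by
      intro j _
      rw [hH]
      simp only [Equiv.Perm.mul_apply]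
      rw [Equiv.sum_comp σ f]
      have he : (fun i : Fin n => f (σ (((finRotate (n+1))^j) i.succ)))
          = fun i : Fin n => f (σ (i.succ + (j : Fin (n+1)))) := by
        funext i
        rw [rot_pow]
      rw [he]
    rw [Finset.sum_congr rfl h1, hcp, Equiv.sum_comp σ f]
  have swap : ∑ j ∈ Finset.range (n+1), ∑ σ : Equiv.Perm (Fin (n+1)),
      H (σ * (finRotate (n+1))^j) = ((n:ℝ)+1) * ∑ σ, H σ := by
    have h2 : ∀ j ∈ Finset.range (n+1), ∑ σ : Equiv.Perm (Fin (n+1)),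
        H (σ * (finRotate (n+1))^j) = ∑ σ, H σ := by
      intro j _
      exact Equiv.sum_comp (Equiv.mulRight ((finRotate (n+1))^j)) H
    rw [Finset.sum_congr rfl h2, Finset.sum_const, Finset.card_range, nsmul_eq_mul]
    push_cast
    ring
  have h3 : ∑ σ : Equiv.Perm (Fin (n+1)), ∑ j ∈ Finset.range (n+1),
      H (σ * (finRotate (n+1))^j) = ((n+1).factorial : ℝ) * max 0 (∑ i, f i) := by
    rw [Finset.sum_congr rfl (fun σ _ => key σ), Finset.sum_const, nsmul_eq_mul]
    congr 2
    rw [Finset.card_univ, Fintype.card_perm, Fintype.card_fin]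
  rw [Finset.sum_comm] at h3
  rw [swap] at h3
  have h4 : ((n+1).factorial : ℝ) = ((n:ℝ)+1) * (n.factorial : ℝ) := by
    rw [Nat.factorial_succ]
    push_cast
    ring
  rw [h4] at h3
  have h5 : ((n:ℝ)+1) ≠ 0 := by positivity
  apply mul_left_cancel₀ h5
  rw [h3]
  ring

lemma phi_inj (n : ℕ) (p : Fin (n+1)) :
    Function.Injective (fun i : Fin n => Equiv.swap 0 p i.succ) := by
  intro a b hab
  simp only [Equiv.apply_eq_iff_eq] at hab
  exact Fin.succ_injective n hab

lemma phi_ne (n : ℕ) (p : Fin (n+1)) (i : Fin n) : Equiv.swap 0 p i.succ ≠ p := by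
  intro h
  apply Fin.succ_ne_zero i
  have h2 := congrArg (Equiv.swap 0 p) h
  rwa [Equiv.swap_apply_self, Equiv.swap_apply_right] at h2

lemma phi_surj (n : ℕ) (p : Fin (n+1)) (j : Fin (n+1)) (hj : j ≠ p) :
    ∃ i : Fin n, Equiv.swap 0 p i.succ = j := by
  have hk : Equiv.swap 0 p j ≠ 0 := by
    intro h
    apply hj
    have := congrArg (Equiv.swap 0 p) h
    rwa [Equiv.swap_apply_self, Equiv.swap_apply_left] at this
  refine ⟨(Equiv.swap 0 p j).pred hk, ?_⟩
  rw [Fin.succ_pred, Equiv.swap_apply_self]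

lemma subset_reindex (n : ℕ) (p : Fin (n+1)) (f : Fin (n+1) → ℝ) (C : ℕ → ℝ) :
    ∑ G ∈ (Finset.univ : Finset (Fin n)).powerset,
      C G.card * max 0 (∑ i ∈ G, f (Equiv.swap 0 p i.succ))
    = ∑ F ∈ ((Finset.univ : Finset (Fin (n+1))).erase p).powerset,
      C F.card * max 0 (∑ j ∈ F, f j) := by
  apply Finset.sum_bij (fun G _ => G.image (fun i : Fin n => Equiv.swap 0 p i.succ))
  · intro G _
    rw [Finset.mem_powerset, Finset.subset_erase]
    constructor
    · exact Finset.subset_univ _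
    · intro hmem
      obtain ⟨i, _, hi⟩ := Finset.mem_image.mp hmem
      exact phi_ne n p i hi
  · intro G1 h1 G2 h2 heq
    exact Finset.image_injective (phi_inj n p) heq
  · intro F hF
    rw [Finset.mem_powerset, Finset.subset_erase] at hF
    refine ⟨Finset.univ.filter (fun i : Fin n => Equiv.swap 0 p i.succ ∈ F),
      Finset.mem_powerset.mpr (Finset.subset_univ _), ?_⟩
    ext j
    simp only [Finset.mem_image, Finset.mem_filter, Finset.mem_univ, true_and]
    constructor
    · rintro ⟨i, hi, rfl⟩
      exact hi
    · intro hj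
      obtain ⟨i, hi⟩ := phi_surj n p j (fun h => hF.2 (h ▸ hj))
      exact ⟨i, hi.symm ▸ hj, hi⟩
  · intro G _
    rw [Finset.card_image_of_injective _ (phi_inj n p),
      Finset.sum_image (fun a _ b _ h => phi_inj n p h)]

lemma partB (n : ℕ) (f : Fin (n+1) → ℝ) (C : ℕ → ℝ)
    (IH : ∀ g : Fin n → ℝ,
      ∑ e : Equiv.Perm (Fin n), smax n (wseq n (fun i => g (e i)))
      = ∑ G ∈ (Finset.univ : Finset (Fin n)).powerset,
          C G.card * max 0 (∑ i ∈ G, g i)) :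
    ∑ σ : Equiv.Perm (Fin (n+1)), smax n (wseq n (fun i : Fin n => f (σ i.succ)))
    = ∑ F ∈ (Finset.univ : Finset (Fin (n+1))).powerset,
        (((n:ℝ)+1) - F.card) * (C F.card * max 0 (∑ j ∈ F, f j)) := by
  have hdec : ∑ σ : Equiv.Perm (Fin (n+1)), smax n (wseq n (fun i : Fin n => f (σ i.succ)))
      = ∑ pe : Fin (n+1) × Equiv.Perm (Fin n),
          smax n (wseq n (fun i : Fin n =>
            f (Equiv.swap 0 pe.1 ((pe.2 i).succ)))) := by
    rw [← Equiv.sum_comp (Equiv.Perm.decomposeFin.symm)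
      (fun σ : Equiv.Perm (Fin (n+1)) => smax n (wseq n (fun i : Fin n => f (σ i.succ))))]
    apply Finset.sum_congr rfl
    intro pe _
    obtain ⟨p, e⟩ := pe
    congr 1
    funext t
    unfold wseq
    split
    · simp only [Equiv.Perm.decomposeFin_symm_apply_succ]
    · rfl
  rw [hdec, Fintype.sum_prod_type]
  have hinner : ∀ p : Fin (n+1),
      ∑ e : Equiv.Perm (Fin n), smax n (wseq n (fun i : Fin n =>
          f (Equiv.swap 0 p ((e i).succ))))
      = ∑ F ∈ ((Finset.univ : Finset (Fin (n+1))).erase p).powerset,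
          C F.card * max 0 (∑ j ∈ F, f j) := by
    intro p
    rw [IH (fun i : Fin n => f (Equiv.swap 0 p i.succ)), subset_reindex n p f C]
  rw [Finset.sum_congr rfl (fun p _ => hinner p)]
  have hfilt : ∀ p : Fin (n+1), ((Finset.univ : Finset (Fin (n+1))).erase p).powerset
      = ((Finset.univ : Finset (Fin (n+1))).powerset).filter (fun F => p ∉ F) := by
    intro p
    ext F
    simp [Finset.subset_erase]
  have hstep : ∀ p : Fin (n+1), ∑ F ∈ ((Finset.univ : Finset (Fin (n+1))).erase p).powerset,
      C F.card * max 0 (∑ j ∈ F, f j)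
      = ∑ F ∈ (Finset.univ : Finset (Fin (n+1))).powerset,
          if p ∉ F then C F.card * max 0 (∑ j ∈ F, f j) else 0 := by
    intro p
    rw [hfilt p, Finset.sum_filter]
  rw [Finset.sum_congr rfl (fun p _ => hstep p), Finset.sum_comm]
  apply Finset.sum_congr rfl
  intro F hF
  have hset : Finset.univ.filter (fun x : Fin (n+1) => x ∉ F) = Finset.univ \ F := by
    ext j
    simp
  have hcard : (Finset.univ.filter (fun x : Fin (n+1) => x ∉ F)).card = (n+1) - F.card := by
    rw [hset, Finset.card_sdiff_of_subset (Finset.subset_univ F), Finset.card_univ, Fintype.card_fin]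
  rw [← Finset.sum_filter, Finset.sum_const, hcard, nsmul_eq_mul]
  have hle : F.card ≤ n+1 := by
    have := Finset.card_le_univ F
    simpa using this
  rw [Nat.cast_sub hle]
  push_cast
  ring

lemma max_eq_add_max_sub (a b : ℝ) : max a b = b + max 0 (a - b) := by
  rcases le_total a b with h | h
  · rw [max_eq_right h, max_eq_left (by linarith)]
    ring
  · rw [max_eq_left h, max_eq_right (by linarith)]
    ring

lemma dhk : ∀ (n : ℕ) (f : Fin n → ℝ),
    ∑ σ : Equiv.Perm (Fin n), smax n (wseq n (fun i => f (σ i)))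
    = ∑ F ∈ (Finset.univ : Finset (Fin n)).powerset,
        ((F.card - 1).factorial : ℝ) * (((n - F.card).factorial : ℕ) : ℝ)
          * max 0 (∑ i ∈ F, f i) := by
  intro n
  induction n with
  | zero =>
      intro f
      have h1 : (Finset.univ : Finset (Fin 0)).powerset = {∅} := by decide
      simp [smax_zero, h1]
  | succ n IH =>
      intro f
      have hstep : ∀ σ : Equiv.Perm (Fin (n+1)),
          smax (n+1) (wseq (n+1) (fun i => f (σ i)))
          = smax n (wseq n (fun i => f (σ i.succ)))
            + max 0 ((∑ i, f i) - smax n (wseq n (fun i => f (σ i.succ)))) := by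
        intro σ
        rw [smax_succ, wseq_shift n (fun i => f (σ i)), wseq_sum (n+1) (fun i => f (σ i)),
          Equiv.sum_comp σ f, max_eq_add_max_sub]
      rw [Finset.sum_congr rfl (fun σ _ => hstep σ), Finset.sum_add_distrib,
        spitzer n f,
        partB n f (fun k => ((k - 1).factorial : ℝ) * (((n - k).factorial : ℕ) : ℝ)) IH]
      rw [← Finset.sum_erase_add _ _ (Finset.mem_powerset.mpr
        (Finset.Subset.refl (Finset.univ : Finset (Fin (n+1)))))]
      conv_rhs => rw [← Finset.sum_erase_add _ _ (Finset.mem_powerset.mpr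
        (Finset.Subset.refl (Finset.univ : Finset (Fin (n+1)))))]
      have hA : ((n:ℝ) + 1 - (((Finset.univ : Finset (Fin (n+1))).card : ℕ) : ℝ))
          * (((((Finset.univ : Finset (Fin (n+1))).card - 1).factorial : ℕ) : ℝ)
            * (((n - (Finset.univ : Finset (Fin (n+1))).card).factorial : ℕ) : ℝ)
            * max 0 (∑ j ∈ (Finset.univ : Finset (Fin (n+1))), f j)) = 0 := by
        rw [Finset.card_univ, Fintype.card_fin]
        push_cast
        ring
      rw [hA, add_zero]
      congr 1
      · apply Finset.sum_congr rfl
        intro F hF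
        have hne : F ≠ Finset.univ := (Finset.mem_erase.mp hF).1
        have hcard : F.card ≤ n := by
          have h1 : F.card < (Finset.univ : Finset (Fin (n+1))).card := by
            apply Finset.card_lt_card
            exact lt_of_le_of_ne (Finset.subset_univ F)
              hne
          rw [Finset.card_univ, Fintype.card_fin] at h1
          omega
        have hfac : ((n:ℝ)+1 - F.card) * (((F.card - 1).factorial : ℝ)
            * (((n - F.card).factorial : ℕ) : ℝ))
            = ((F.card - 1).factorial : ℝ) * (((n + 1 - F.card).factorial : ℕ) : ℝ) := by
          have h2 : (n + 1 - F.card) = (n - F.card) + 1 := by omega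
          rw [h2, Nat.factorial_succ]
          have h3 : ((n:ℝ)+1 - F.card) = ((n - F.card : ℕ) : ℝ) + 1 := by
            have h4 : (n - F.card : ℕ) = n - F.card := rfl
            have : ((n - F.card : ℕ) : ℝ) = (n : ℝ) - F.card := by
              rw [Nat.cast_sub hcard]
            rw [this]
            ring
          rw [h3]
          push_cast
          ring
        rw [← hfac]
        ring
      · rw [Finset.card_univ, Fintype.card_fin]
        have h5 : (n + 1) - (n + 1) = 0 := by omega
        rw [h5]
        have h6 : ((n + 1 : ℕ) : ℝ) - ((n + 1 : ℕ) : ℝ) = 0 := by ring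
        push_cast
        rw [Nat.factorial]
        push_cast
        ring

lemma sum_ico_wseq (n : ℕ) (g : Fin n → ℝ) (a : ℕ) :
    ∑ u ∈ Finset.Ico a n, wseq n g u
    = ∑ i ∈ Finset.univ.filter (fun i : Fin n => a ≤ (i : ℕ)), g i := by
  have h1 : Finset.Ico a n = (Finset.range n).filter (fun u => a ≤ u) := by
    ext u
    simp only [Finset.mem_Ico, Finset.mem_filter, Finset.mem_range]
    omega
  rw [h1, Finset.sum_filter, ← Fin.sum_univ_eq_sum_range
    (fun u => if a ≤ u then wseq n g u else 0) n, Finset.sum_filter]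
  apply Finset.sum_congr rfl
  intro i _
  have h2 : wseq n g (i : ℕ) = g i := by
    rw [wseq, dif_pos i.isLt]
  rw [h2]

lemma topconv (n : ℕ) (hn : 1 ≤ n) (x : Fin n → ℝ) (hx : ∑ i, x i = 0) :
    ∑ σ : Equiv.Perm (Fin n),
      (Finset.Icc 1 n).sup' (Finset.nonempty_Icc.mpr hn)
        (fun j => ∑ i ∈ Finset.univ.filter (fun i : Fin n => (i : ℕ) < j), x (σ i))
    = ∑ σ : Equiv.Perm (Fin n), smax n (wseq n (fun i => x (σ i))) := by
  rw [← Equiv.sum_comp (Equiv.mulRight (Fin.revPerm : Equiv.Perm (Fin n)))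
    (fun σ : Equiv.Perm (Fin n) =>
      (Finset.Icc 1 n).sup' (Finset.nonempty_Icc.mpr hn)
        (fun j => ∑ i ∈ Finset.univ.filter (fun i : Fin n => (i : ℕ) < j), x (σ i)))]
  apply Finset.sum_congr rfl
  intro σ _
  simp only [Equiv.coe_mulRight, Equiv.Perm.mul_apply, Fin.revPerm_apply]
  have hφ : ∀ j ∈ Finset.Icc 1 n,
      (∑ i ∈ Finset.univ.filter (fun i : Fin n => (i : ℕ) < j), x (σ (Fin.rev i)))
      = ∑ u ∈ Finset.Ico (n - j) n, wseq n (fun i => x (σ i)) u := by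
    intro j hj
    obtain ⟨hj1, hj2⟩ := Finset.mem_Icc.mp hj
    rw [sum_ico_wseq n (fun i => x (σ i)) (n - j)]
    apply Finset.sum_nbij' (fun i => Fin.rev i) (fun i => Fin.rev i)
    · intro i hi
      rw [Finset.mem_filter] at hi ⊢
      refine ⟨Finset.mem_univ _, ?_⟩
      have h1 : (Fin.rev i : ℕ) = n - ((i:ℕ) + 1) := rfl
      have h2 := hi.2
      omega
    · intro i hi
      rw [Finset.mem_filter] at hi ⊢
      refine ⟨Finset.mem_univ _, ?_⟩
      have h1 : (Fin.rev i : ℕ) = n - ((i:ℕ) + 1) := rfl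
      have h2 := hi.2
      have h3 := i.isLt
      omega
    · intro i _
      exact Fin.rev_rev i
    · intro i _
      exact Fin.rev_rev i
    · intro i _
      rfl
  rw [Finset.sup'_congr (Finset.nonempty_Icc.mpr hn) rfl hφ]
  have hphi0 : ∑ u ∈ Finset.Ico 0 n, wseq n (fun i => x (σ i)) u = 0 := by
    rw [← Finset.range_eq_Ico, wseq_sum, Equiv.sum_comp σ x, hx]
  apply le_antisymm
  · apply Finset.sup'_le
    intro j hj
    obtain ⟨hj1, hj2⟩ := Finset.mem_Icc.mp hj
    exact Finset.le_sup' (fun t => ∑ u ∈ Finset.Ico t n, wseq n (fun i => x (σ i)) u)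
      (Finset.mem_range.mpr (show n - j < n + 1 by omega))
  · apply Finset.sup'_le
    intro t ht
    rw [Finset.mem_range] at ht
    rcases eq_or_lt_of_le (Nat.lt_succ_iff.mp ht) with h | h
    · refine le_trans (le_of_eq ?_) (Finset.le_sup' (fun j => ∑ u ∈ Finset.Ico (n - j) n,
        wseq n (fun i => x (σ i)) u) (Finset.mem_Icc.mpr ⟨hn, le_refl n⟩))
      show ∑ u ∈ Finset.Ico t n, wseq n (fun i => x (σ i)) u
        = ∑ u ∈ Finset.Ico (n - n) n, wseq n (fun i => x (σ i)) u
      rw [h, Finset.Ico_self, Finset.sum_empty, show n - n = 0 by omega, hphi0]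
    · refine le_trans (le_of_eq ?_) (Finset.le_sup' (fun j => ∑ u ∈ Finset.Ico (n - j) n,
        wseq n (fun i => x (σ i)) u) (Finset.mem_Icc.mpr
          (⟨by omega, by omega⟩ : 1 ≤ n - t ∧ n - t ≤ n)))
      show ∑ u ∈ Finset.Ico t n, wseq n (fun i => x (σ i)) u
        = ∑ u ∈ Finset.Ico (n - (n - t)) n, wseq n (fun i => x (σ i)) u
      congr 2
      omega

lemma max0_eq (t : ℝ) : max 0 t = (|t| + t) / 2 := by
  rcases le_total 0 t with h | h
  · rw [max_eq_right h, abs_of_nonneg h]; ring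
  · rw [max_eq_left h, abs_of_nonpos h]; ring

lemma swap_indep (n : ℕ) (c : ℕ → ℝ) (i j : Fin n) :
    ∑ F ∈ (Finset.univ : Finset (Fin n)).powerset, (if i ∈ F then c F.card else 0)
    = ∑ F ∈ (Finset.univ : Finset (Fin n)).powerset, (if j ∈ F then c F.card else 0) := by
  apply Finset.sum_nbij' (fun F => F.image (Equiv.swap i j)) (fun F => F.image (Equiv.swap i j))
  · intro F _
    exact Finset.mem_powerset.mpr (Finset.subset_univ _)
  · intro F _
    exact Finset.mem_powerset.mpr (Finset.subset_univ _)
  · intro F _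
    rw [Finset.image_image]
    have h1 : (Equiv.swap i j) ∘ (Equiv.swap i j) = id := by
      funext a
      simp [Equiv.swap_apply_self]
    rw [h1, Finset.image_id]
  · intro F _
    rw [Finset.image_image]
    have h1 : (Equiv.swap i j) ∘ (Equiv.swap i j) = id := by
      funext a
      simp [Equiv.swap_apply_self]
    rw [h1, Finset.image_id]
  · intro F _
    have hcard : (F.image (Equiv.swap i j)).card = F.card :=
      Finset.card_image_of_injective _ (Equiv.injective _)
    have hmem : j ∈ F.image (Equiv.swap i j) ↔ i ∈ F := by
      constructor
      · intro h
        obtain ⟨a, ha, haj⟩ := Finset.mem_image.mp h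
        have : a = i := by
          have := congrArg (Equiv.swap i j) haj
          rwa [Equiv.swap_apply_self, Equiv.swap_apply_right] at this
        rwa [← this]
      · intro h
        exact Finset.mem_image.mpr ⟨i, h, Equiv.swap_apply_left i j⟩
    rw [hcard]
    by_cases h : i ∈ F
    · rw [if_pos h, if_pos (hmem.mpr h)]
    · rw [if_neg h, if_neg (fun hc => h (hmem.mp hc))]

lemma lin_zero (n : ℕ) (hn : 1 ≤ n) (x : Fin n → ℝ) (hx : ∑ i, x i = 0) (c : ℕ → ℝ) :
    ∑ F ∈ (Finset.univ : Finset (Fin n)).powerset, c F.card * (∑ i ∈ F, x i) = 0 := by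
  have i0 : Fin n := ⟨0, by omega⟩
  have h1 : ∀ F ∈ (Finset.univ : Finset (Fin n)).powerset, c F.card * (∑ i ∈ F, x i)
      = ∑ i : Fin n, (if i ∈ F then c F.card else 0) * x i := by
    intro F _
    have h2 : ∀ i : Fin n, (if i ∈ F then c F.card else 0) * x i
        = if i ∈ F then c F.card * x i else 0 := by
      intro i
      split <;> simp
    rw [Finset.sum_congr rfl (fun i _ => h2 i), Finset.sum_ite_mem, Finset.univ_inter,
      Finset.mul_sum]
  rw [Finset.sum_congr rfl h1, Finset.sum_comm]
  have h3 : ∀ i : Fin n, ∑ F ∈ (Finset.univ : Finset (Fin n)).powerset,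
      (if i ∈ F then c F.card else 0) * x i
      = (∑ F ∈ (Finset.univ : Finset (Fin n)).powerset,
          (if i0 ∈ F then c F.card else 0)) * x i := by
    intro i
    rw [← Finset.sum_mul, swap_indep n c i i0]
  rw [Finset.sum_congr rfl (fun i _ => h3 i), ← Finset.mul_sum, hx, mul_zero]

lemma pairing (n : ℕ) (hn : 1 ≤ n) (x : Fin n → ℝ) (hx : ∑ i, x i = 0) :
    ∑ F ∈ (Finset.univ : Finset (Fin n)).powerset,
        ((F.card - 1).factorial : ℝ) * (((n - F.card).factorial : ℕ) : ℝ)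
          * max 0 (∑ i ∈ F, x i)
    = ((n : ℝ) / 4) * ∑ F ∈ (Finset.univ : Finset (Fin n)).powerset,
        (if F.card = 0 then 0 else ((F.card - 1).factorial : ℝ)) *
          (if F.card = n then 0 else ((n - F.card - 1).factorial : ℝ)) *
          |∑ k ∈ F, x k| := by
  set A := ∑ F ∈ (Finset.univ : Finset (Fin n)).powerset,
      ((F.card - 1).factorial : ℝ) * (((n - F.card).factorial : ℕ) : ℝ)
        * max 0 (∑ i ∈ F, x i) with hA
  have hcompl : A = ∑ F ∈ (Finset.univ : Finset (Fin n)).powerset,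
      ((n - F.card - 1).factorial : ℝ) * ((F.card.factorial : ℕ) : ℝ)
        * max 0 (-(∑ i ∈ F, x i)) := by
    rw [hA]
    apply Finset.sum_nbij' (fun F => Fᶜ) (fun F => Fᶜ)
    · intro F _
      exact Finset.mem_powerset.mpr (Finset.subset_univ _)
    · intro F _
      exact Finset.mem_powerset.mpr (Finset.subset_univ _)
    · intro F _
      exact compl_compl F
    · intro F _
      exact compl_compl F
    · intro F _
      have hcard : Fᶜ.card = n - F.card := by
        rw [Finset.card_compl, Fintype.card_fin]
      have hle : F.card ≤ n := by
        have := Finset.card_le_univ F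
        simpa using this
      have hsum : ∑ i ∈ Fᶜ, x i = -(∑ i ∈ F, x i) := by
        have := Finset.sum_add_sum_compl F x
        rw [hx] at this
        linarith
      have h9 : n - (n - F.card) - 1 = F.card - 1 := by omega
      rw [hcard, hsum, neg_neg, h9]
  have hmax : ∀ t : ℝ, max 0 (-t) = (|t| - t) / 2 := by
    intro t
    rw [max0_eq, abs_neg]
    ring
  have key : ∀ F ∈ (Finset.univ : Finset (Fin n)).powerset,
      ((F.card - 1).factorial : ℝ) * (((n - F.card).factorial : ℕ) : ℝ)
          * max 0 (∑ i ∈ F, x i)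
        + ((n - F.card - 1).factorial : ℝ) * ((F.card.factorial : ℕ) : ℝ)
          * max 0 (-(∑ i ∈ F, x i))
      = (n : ℝ) / 2 * ((if F.card = 0 then 0 else ((F.card - 1).factorial : ℝ)) *
          (if F.card = n then 0 else ((n - F.card - 1).factorial : ℝ)) *
          |∑ k ∈ F, x k|)
        + (((F.card - 1).factorial : ℝ) * (((n - F.card).factorial : ℕ) : ℝ)
            - ((n - F.card - 1).factorial : ℝ) * ((F.card.factorial : ℕ) : ℝ))
          * (∑ i ∈ F, x i) / 2 := by
    intro F hF
    have hle : F.card ≤ n := by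
      have := Finset.card_le_univ F
      simpa using this
    rcases Nat.eq_zero_or_pos F.card with h0 | h0
    · have hemp : F = ∅ := Finset.card_eq_zero.mp h0
      subst hemp
      simp
    rcases eq_or_lt_of_le hle with hN | hN
    · have huniv : F = Finset.univ := by
        apply Finset.eq_univ_of_card
        rw [hN, Fintype.card_fin]
      have hS : ∑ i ∈ F, x i = 0 := by rw [huniv]; exact hx
      rw [hS]
      simp
    · rw [if_neg (by omega), if_neg (by omega)]
      have e1 : (((n - F.card).factorial : ℕ) : ℝ)
          = ((n - F.card : ℕ) : ℝ) * ((n - F.card - 1).factorial : ℝ) := by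
        rw [show n - F.card = (n - F.card - 1) + 1 by omega, Nat.factorial_succ]
        push_cast
        ring
      have e2 : ((F.card.factorial : ℕ) : ℝ)
          = ((F.card : ℕ) : ℝ) * ((F.card - 1).factorial : ℝ) := by
        rw [show F.card = (F.card - 1) + 1 by omega, Nat.factorial_succ]
        push_cast
        ring
      have e3 : ((n - F.card : ℕ) : ℝ) = (n : ℝ) - (F.card : ℝ) := by
        rw [Nat.cast_sub hle]
      rw [e1, e2, e3, max0_eq, hmax]
      ring
  have h2A : A + A = ∑ F ∈ (Finset.univ : Finset (Fin n)).powerset,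
      ((n : ℝ) / 2 * ((if F.card = 0 then 0 else ((F.card - 1).factorial : ℝ)) *
          (if F.card = n then 0 else ((n - F.card - 1).factorial : ℝ)) *
          |∑ k ∈ F, x k|)
        + (((F.card - 1).factorial : ℝ) * (((n - F.card).factorial : ℕ) : ℝ)
            - ((n - F.card - 1).factorial : ℝ) * ((F.card.factorial : ℕ) : ℝ))
          * (∑ i ∈ F, x i) / 2) := by
    nth_rewrite 2 [hcompl]
    rw [hA, ← Finset.sum_add_distrib]
    exact Finset.sum_congr rfl key
  rw [Finset.sum_add_distrib] at h2A
  have hlin : ∑ F ∈ (Finset.univ : Finset (Fin n)).powerset,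
      (((F.card - 1).factorial : ℝ) * (((n - F.card).factorial : ℕ) : ℝ)
          - ((n - F.card - 1).factorial : ℝ) * ((F.card.factorial : ℕ) : ℝ))
        * (∑ i ∈ F, x i) / 2 = 0 := by
    have := lin_zero n hn x hx (fun k => (((k - 1).factorial : ℝ)
      * (((n - k).factorial : ℕ) : ℝ)
      - ((n - k - 1).factorial : ℝ) * ((k.factorial : ℕ) : ℝ)) / 2)
    rw [← this]
    apply Finset.sum_congr rfl
    intro F _
    ring
  rw [hlin, add_zero, ← Finset.mul_sum] at h2A
  have : (2 : ℝ) * A = (n : ℝ) / 2 * ∑ F ∈ (Finset.univ : Finset (Fin n)).powerset,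
      ((if F.card = 0 then 0 else ((F.card - 1).factorial : ℝ)) *
        (if F.card = n then 0 else ((n - F.card - 1).factorial : ℝ)) *
        |∑ k ∈ F, x k|) := by
    rw [← h2A]; ring
  linarith

theorem rudnick_sarnak (n : ℕ) (hn : 1 ≤ n) (x : Fin n → ℝ) (hx : ∑ i, x i = 0) :
    ∑ σ : Equiv.Perm (Fin n),
      (Finset.Icc 1 n).sup' (Finset.nonempty_Icc.mpr hn)
        (fun j => ∑ i ∈ Finset.univ.filter (fun i : Fin n => (i : ℕ) < j), x (σ i))
    = ((n : ℝ) / 4) * ∑ F ∈ (Finset.univ : Finset (Fin n)).powerset,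
        (if F.card = 0 then 0 else ((F.card - 1).factorial : ℝ)) *
          (if F.card = n then 0 else ((n - F.card - 1).factorial : ℝ)) *
          |∑ k ∈ F, x k| := by
  rw [topconv n hn x hx, dhk n x, pairing n hn x hx]
end
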